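/- A compact Hausdorff space X has countable Souslin number (ccc) if and only if for every compact Hausdorff space Y, every separately continuous function f : X × Y → ℝ is of the first Baire class (a pointwise limit of a sequence of jointly continuous functions). -/

import Mathlib

open Filter Topology Set Function

/-- `f` is of the first Baire class: a pointwise limit of continuous functions. -/
def FirstBaireClass {W : Type*} [TopologicalSpace W] (f : W → ℝ) : Prop :=
  ∃ g : ℕ → W → ℝ, (∀ n, Continuous (g n)) ∧
    ∀ w, Filter.Tendsto (fun n => g n w) Filter.atTop (nhds (f w))

universe u v

set_option maxHeartbeats 1000000 in
lemma ccc_lemma {X : Type*} [TopologicalSpace X]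
    (hccc : ∀ 𝒞 : Set (Set X), (∀ s ∈ 𝒞, IsOpen s ∧ s.Nonempty) →
      𝒞.PairwiseDisjoint id → 𝒞.Countable)
    {ι : Type*} (V : ι → Set X) (hop : ∀ i, IsOpen (V i)) (hne : ∀ i, (V i).Nonempty)
    (hunc : ¬(Set.univ : Set ι).Countable) :
    ∃ O : Set X, IsOpen O ∧ O.Nonempty ∧
      ∀ U : Set X, IsOpen U → U.Nonempty → U ⊆ O → ¬{i | (V i ∩ U).Nonempty}.Countable := by
  classical
  set Bad : Set (Set X) := {W | IsOpen W ∧ W.Nonempty ∧ {i | (V i ∩ W).Nonempty}.Countable}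
    with hBad
  set S : Set (Set (Set X)) := {𝒟 | 𝒟 ⊆ Bad ∧ 𝒟.PairwiseDisjoint id} with hS
  have hchain : ∀ c ⊆ S, IsChain (· ⊆ ·) c → ∃ ub ∈ S, ∀ s ∈ c, s ⊆ ub := by
    intro c hc hchain
    refine ⟨⋃₀ c, ⟨?_, ?_⟩, fun s hs => subset_sUnion_of_mem hs⟩
    · intro W hW
      obtain ⟨A, hA, hWA⟩ := hW
      exact (hc hA).1 hWA
    · intro s hs t ht hst
      obtain ⟨A, hA, hsA⟩ := hs
      obtain ⟨B, hB, htB⟩ := ht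
      rcases hchain.total hA hB with h | h
      · exact (hc hB).2 (h hsA) htB hst
      · exact (hc hA).2 hsA (h htB) hst
  obtain ⟨𝒟, h𝒟⟩ := zorn_subset S hchain
  have h𝒟S : 𝒟 ∈ S := h𝒟.prop
  have h𝒟cnt : 𝒟.Countable := hccc 𝒟 (fun s hs => ⟨(h𝒟S.1 hs).1, (h𝒟S.1 hs).2.1⟩) h𝒟S.2
  set T := ⋃₀ 𝒟 with hT
  refine ⟨(closure T)ᶜ, isClosed_closure.isOpen_compl, ?_, ?_⟩
  · by_contra hO
    rw [Set.not_nonempty_iff_eq_empty, compl_empty_iff] at hO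
    have hdense : Dense T := by
      rw [dense_iff_closure_eq]
      exact hO
    have hcov : (Set.univ : Set ι) ⊆ ⋃ W ∈ 𝒟, {i | (V i ∩ W).Nonempty} := by
      intro i _
      obtain ⟨x, hxV, hxT⟩ := hdense.inter_open_nonempty (V i) (hop i) (hne i)
      obtain ⟨W, hW, hxW⟩ := hxT
      exact Set.mem_biUnion hW ⟨x, hxV, hxW⟩
    exact hunc (Set.Countable.mono hcov
      (Set.Countable.biUnion h𝒟cnt fun W hW => (h𝒟S.1 hW).2.2))
  · intro U hUop hUne hUO hcnt
    have hUBad : U ∈ Bad := ⟨hUop, hUne, hcnt⟩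
    have hdisjT : ∀ W ∈ 𝒟, Disjoint U W := by
      intro W hW
      refine Set.disjoint_left.2 fun x hxU hxW => ?_
      exact (hUO hxU) (subset_closure ⟨W, hW, hxW⟩)
    have hins : insert U 𝒟 ∈ S := by
      refine ⟨Set.insert_subset hUBad h𝒟S.1, ?_⟩
      apply h𝒟S.2.insert
      intro W hW _
      exact hdisjT W hW
    have hUmem : U ∈ 𝒟 := h𝒟.mem_of_prop_insert hins
    obtain ⟨x, hx⟩ := hUne
    exact (hUO hx) (subset_closure ⟨U, hUmem, hx⟩)

section Sep

set_option linter.unusedSectionVars false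
attribute [local instance] Classical.propDecidable


variable {X : Type u} {Y : Type v} [TopologicalSpace X] [TopologicalSpace Y]
variable [CompactSpace X] [CompactSpace Y] [Nonempty Y]
variable (f : X × Y → ℝ)
variable (hcon : ∀ D : Set X, D.Countable →
  ∃ y y' : Y, (∀ d ∈ D, f (d, y) = f (d, y')) ∧ ∃ x, f (x, y) ≠ f (x, y'))

/-- chosen pair of `Y`-points agreeing on `D` but not everywhere. -/
noncomputable def yy (D : Set X) (h : D.Countable) : Y × Y :=
  ⟨(hcon D h).choose, (hcon D h).choose_spec.choose⟩

lemma yy_agree (D : Set X) (h : D.Countable) :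
    ∀ d ∈ D, f (d, (yy f hcon D h).1) = f (d, (yy f hcon D h).2) :=
  (hcon D h).choose_spec.choose_spec.1

lemma yy_ne (D : Set X) (h : D.Countable) :
    ∃ x, f (x, (yy f hcon D h).1) ≠ f (x, (yy f hcon D h).2) :=
  (hcon D h).choose_spec.choose_spec.2

/-- the difference function at stage `D`. -/
noncomputable def hf (D : Set X) : X → ℝ :=
  if h : D.Countable then fun x => f (x, (yy f hcon D h).1) - f (x, (yy f hcon D h).2)
  else fun _ => 0

lemma hf_eq (D : Set X) (h : D.Countable) :
    hf f hcon D = fun x => f (x, (yy f hcon D h).1) - f (x, (yy f hcon D h).2) :=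
  dif_pos h

lemma hf_zero (D : Set X) (h : D.Countable) : ∀ d ∈ D, hf f hcon D d = 0 := by
  intro d hd
  rw [hf_eq f hcon D h]
  rw [sub_eq_zero]
  exact yy_agree f hcon D h d hd

lemma hf_ne (D : Set X) (h : D.Countable) : ∃ x, hf f hcon D x ≠ 0 := by
  obtain ⟨x, hx⟩ := yy_ne f hcon D h
  exact ⟨x, by rw [hf_eq f hcon D h]; exact sub_ne_zero.2 hx⟩

lemma hf_cont (hfx : ∀ y, Continuous fun x => f (x, y)) (D : Set X) :
    Continuous (hf f hcon D) := by
  unfold hf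
  split
  · exact (hfx _).sub (hfx _)
  · exact continuous_const

/-- the "big value" open set. -/
def Vq (D : Set X) (q : ℚ) : Set X := {x | (q : ℝ) < |hf f hcon D x|}

lemma Vq_open (hfx : ∀ y, Continuous fun x => f (x, y)) (D : Set X) (q : ℚ) :
    IsOpen (Vq f hcon D q) :=
  isOpen_lt continuous_const (hf_cont f hcon hfx D).abs

/-- pick a point from a nonempty set. -/
noncomputable def pick (s : Set X) : Set X := if h : s.Nonempty then {h.some} else ∅

lemma pick_subset (s : Set X) : pick s ⊆ s := by
  unfold pick
  split
  · next h => exact Set.singleton_subset_iff.2 h.some_mem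
  · exact Set.empty_subset _

lemma pick_nonempty {s : Set X} (h : s.Nonempty) : (pick s).Nonempty := by
  unfold pick
  rw [dif_pos h]
  exact Set.singleton_nonempty _

lemma pick_subsingleton (s : Set X) : (pick s).Subsingleton := by
  unfold pick
  split
  · exact Set.subsingleton_singleton
  · exact Set.subsingleton_empty

noncomputable def pieceFun (Df : Ordinal.{0} → Set X) (o : Ordinal.{0})
    (F : Set Ordinal.{0}) (q : ℚ) : Set X :=
  if F.Finite ∧ F ⊆ Set.Iic o then pick (⋂ β ∈ F, Vq f hcon (Df β) q) else ∅

noncomputable def EStep (o : Ordinal.{0}) (rec : ∀ o' : Ordinal.{0}, o' < o → Set X) : Set X :=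
  ⋃ (F : Set Ordinal.{0}) (q : ℚ),
    pieceFun f hcon
      (fun β => ⋃ (p : {o' : Ordinal.{0} // o' < β ∧ o' < o}), rec p.1 p.2.2) o F q

noncomputable def Eset : Ordinal.{0} → Set X := Ordinal.lt_wf.fix (EStep f hcon)

noncomputable def Dset (o : Ordinal.{0}) : Set X :=
  ⋃ (p : ↥(Set.Iio o)), Eset f hcon p.1

lemma Eset_def (o : Ordinal.{0}) :
    Eset f hcon o = EStep f hcon o (fun o' _ => Eset f hcon o') :=
  WellFounded.fix_eq _ _ _

lemma Dloc_eq (o β : Ordinal.{0}) (h : β ≤ o) :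
    (⋃ (p : {o' : Ordinal.{0} // o' < β ∧ o' < o}), Eset f hcon p.1) = Dset f hcon β := by
  ext x
  simp only [Dset, Set.mem_iUnion]
  constructor
  · rintro ⟨⟨o', ho'⟩, hx⟩
    exact ⟨⟨o', ho'.1⟩, hx⟩
  · rintro ⟨⟨o', ho'⟩, hx⟩
    exact ⟨⟨o', ho', lt_of_lt_of_le ho' h⟩, hx⟩

lemma Eset_eq (o : Ordinal.{0}) :
    Eset f hcon o = ⋃ (F : Set Ordinal.{0}) (q : ℚ),
      pieceFun f hcon (Dset f hcon) o F q := by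
  rw [Eset_def]
  unfold EStep
  refine Set.iUnion_congr fun F => Set.iUnion_congr fun q => ?_
  unfold pieceFun
  by_cases hF : F.Finite ∧ F ⊆ Set.Iic o
  · rw [if_pos hF, if_pos hF]
    have : (⋂ β ∈ F, Vq f hcon (⋃ (p : {o' : Ordinal.{0} // o' < β ∧ o' < o}),
        Eset f hcon p.1) q) = ⋂ β ∈ F, Vq f hcon (Dset f hcon β) q := by
      refine Set.iInter_congr fun β => ?_
      refine Set.iInter_congr fun hβ => ?_
      rw [Dloc_eq f hcon o β (hF.2 hβ)]
    rw [this]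
  · rw [if_neg hF, if_neg hF]


lemma Eset_subset_Dset {β o : Ordinal.{0}} (h : β < o) :
    Eset f hcon β ⊆ Dset f hcon o := fun x hx =>
  Set.mem_iUnion.2 ⟨⟨β, h⟩, hx⟩

lemma Eset_sel (o : Ordinal.{0}) (F : Set Ordinal.{0}) (q : ℚ)
    (hF : F.Finite) (hFo : F ⊆ Set.Iic o)
    (hne : (⋂ β ∈ F, Vq f hcon (Dset f hcon β) q).Nonempty) :
    ∃ x ∈ ⋂ β ∈ F, Vq f hcon (Dset f hcon β) q, x ∈ Eset f hcon o := by
  obtain ⟨x, hx⟩ := pick_nonempty hne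
  refine ⟨x, pick_subset _ hx, ?_⟩
  rw [Eset_eq]
  refine Set.mem_iUnion.2 ⟨F, Set.mem_iUnion.2 ⟨q, ?_⟩⟩
  unfold pieceFun
  rw [if_pos ⟨hF, hFo⟩]
  exact hx

/-- first uncountable ordinal -/
noncomputable def om1 : Ordinal.{0} := (Cardinal.aleph 1).ord

lemma Iio_countable {o : Ordinal.{0}} (ho : o < om1) : (Set.Iio o).Countable := by
  rw [← Set.countable_coe_iff, ← Cardinal.mk_le_aleph0_iff, Ordinal.mk_Iio_ordinal]
  have h1 : o.card < Cardinal.aleph 1 := Cardinal.lt_ord.1 ho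
  rw [← Cardinal.succ_aleph0, Order.lt_succ_iff] at h1
  calc Cardinal.lift.{1} o.card ≤ Cardinal.lift.{1} Cardinal.aleph0 :=
        Cardinal.lift_le.2 h1
    _ = Cardinal.aleph0 := Cardinal.lift_aleph0

lemma om1_isLimit : Order.IsSuccLimit om1 :=
  Cardinal.isSuccLimit_ord (Cardinal.aleph0_le_aleph 1)

lemma Iic_countable {o : Ordinal.{0}} (ho : o < om1) : (Set.Iic o).Countable := by
  have h1 : o + 1 < om1 := by
    rw [Ordinal.add_one_eq_succ]
    exact om1_isLimit.succ_lt ho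
  refine (Iio_countable h1).mono ?_
  intro a ha
  rw [Set.mem_Iio, Ordinal.add_one_eq_succ]
  exact Order.lt_succ_iff.2 ha

lemma Iio_om1_uncountable : ¬ (Set.Iio om1).Countable := by
  rw [← Set.countable_coe_iff, ← Cardinal.mk_le_aleph0_iff, Ordinal.mk_Iio_ordinal] at *
  intro h
  rw [om1, Cardinal.card_ord] at h
  have : Cardinal.aleph 1 ≤ Cardinal.aleph0 := by
    rw [← Cardinal.lift_aleph0.{1,0}] at h
    exact Cardinal.lift_le.1 h
  exact absurd this (not_le.2 (by
    have := Cardinal.aleph0_lt_aleph_one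
    exact this))

lemma Eset_countable {o : Ordinal.{0}} (ho : o < om1) : (Eset f hcon o).Countable := by
  rw [Eset_eq]
  set S : Set (Set Ordinal.{0}) := {F | F.Finite ∧ F ⊆ Set.Iic o} with hs
  have hScnt : S.Countable := Set.countable_setOf_finite_subset (Iic_countable ho)
  haveI : Countable ↥S := hScnt.to_subtype
  have heq : (⋃ (F : Set Ordinal.{0}) (q : ℚ), pieceFun f hcon (Dset f hcon) o F q)
      = ⋃ (p : ↥S) (q : ℚ), pieceFun f hcon (Dset f hcon) o p.1 q := by
    apply Set.Subset.antisymm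
    · intro x hx
      obtain ⟨F, hF⟩ := Set.mem_iUnion.1 hx
      obtain ⟨q, hq⟩ := Set.mem_iUnion.1 hF
      by_cases hFS : F.Finite ∧ F ⊆ Set.Iic o
      · exact Set.mem_iUnion.2 ⟨⟨F, hFS⟩, Set.mem_iUnion.2 ⟨q, hq⟩⟩
      · rw [pieceFun, if_neg hFS] at hq
        exact absurd hq (Set.notMem_empty x)
    · intro x hx
      obtain ⟨⟨F, hFS⟩, hF⟩ := Set.mem_iUnion.1 hx
      obtain ⟨q, hq⟩ := Set.mem_iUnion.1 hF
      exact Set.mem_iUnion.2 ⟨F, Set.mem_iUnion.2 ⟨q, hq⟩⟩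
  rw [heq]
  refine Set.countable_iUnion fun p => Set.countable_iUnion fun q => ?_
  unfold pieceFun
  split
  · exact (pick_subsingleton _).countable
  · exact Set.countable_empty

lemma Dset_countable {o : Ordinal.{0}} (ho : o < om1) : (Dset f hcon o).Countable := by
  haveI : Countable ↥(Set.Iio o) := (Iio_countable ho).to_subtype
  exact Set.countable_iUnion fun p => Eset_countable f hcon (lt_trans p.2 ho)


end Sep

section SepMain


attribute [local instance] Classical.propDecidable

theorem sep_main {X : Type u} {Y : Type v} [TopologicalSpace X] [TopologicalSpace Y]
    [CompactSpace X] [CompactSpace Y] [Nonempty Y]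
    (hccc : ∀ 𝒞 : Set (Set X), (∀ s ∈ 𝒞, IsOpen s ∧ s.Nonempty) →
      𝒞.PairwiseDisjoint id → 𝒞.Countable)
    (f : X × Y → ℝ)
    (hfx : ∀ y, Continuous fun x => f (x, y))
    (hfy : ∀ x, Continuous fun y => f (x, y)) :
    ∃ D : Set X, D.Countable ∧
      ∀ y y' : Y, (∀ d ∈ D, f (d, y) = f (d, y')) → ∀ x, f (x, y) = f (x, y') := by
  by_contra hno
  push_neg at hno
  have hcon : ∀ D : Set X, D.Countable →
      ∃ y y' : Y, (∀ d ∈ D, f (d, y) = f (d, y')) ∧ ∃ x, f (x, y) ≠ f (x, y') := by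
    intro D hD
    obtain ⟨y, y', h1, x, h2⟩ := hno D hD
    exact ⟨y, y', h1, x, h2⟩
  clear hno
  -- pigeonhole: a fixed positive rational level with uncountably many stages
  set Aq : ℚ → Set Ordinal.{0} := fun q =>
    {o | o < om1 ∧ 0 < q ∧ ∃ x, (q : ℝ) < |hf f hcon (Dset f hcon o) x|} with hAq
  have hcover : Set.Iio om1 ⊆ ⋃ q : ℚ, Aq q := by
    intro o ho
    obtain ⟨x, hx⟩ := hf_ne f hcon _ (Dset_countable f hcon ho)
    obtain ⟨q, hq1, hq2⟩ := exists_rat_btwn (abs_pos.2 hx)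
    exact Set.mem_iUnion.2 ⟨q, ho, by exact_mod_cast hq1, x, hq2⟩
  have hq : ∃ q : ℚ, ¬(Aq q).Countable := by
    by_contra hall
    push_neg at hall
    exact Iio_om1_uncountable ((Set.countable_iUnion hall).mono hcover)
  obtain ⟨q, hqunc⟩ := hq
  set A := Aq q with hA
  have hAom : ∀ o ∈ A, o < om1 := fun o ho => ho.1
  have hq0 : 0 < q := by
    have hAne : A.Nonempty := by
      rw [Set.nonempty_iff_ne_empty]
      intro h
      exact hqunc (by rw [h]; exact Set.countable_empty)
    obtain ⟨o, ho⟩ := hAne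
    exact ho.2.1
  have hAwit : ∀ o ∈ A, (Vq f hcon (Dset f hcon o) q).Nonempty := fun o ho => ho.2.2
  -- ccc lemma
  have huncA : ¬(Set.univ : Set ↥A).Countable := by
    rw [Set.countable_univ_iff, Set.countable_coe_iff]
    exact hqunc
  obtain ⟨O, hOop, hOne, hOprop⟩ := ccc_lemma hccc
    (fun a : ↥A => Vq f hcon (Dset f hcon a.1) q)
    (fun a => Vq_open f hcon hfx _ q) (fun a => hAwit a.1 a.2) huncA
  -- from the ccc property: unbounded choice
  have hbig : ∀ U : Set X, IsOpen U → U.Nonempty → U ⊆ O → ∀ b : Ordinal.{0}, b < om1 →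
      ∃ a ∈ A, b < a ∧ (Vq f hcon (Dset f hcon a) q ∩ U).Nonempty := by
    intro U hU hUn hUO b hb
    by_contra hnot
    push_neg at hnot
    apply hOprop U hU hUn hUO
    have hsub : {i : ↥A | (Vq f hcon (Dset f hcon i.1) q ∩ U).Nonempty}
        ⊆ Subtype.val ⁻¹' (Set.Iic b) := by
      intro i hi
      by_contra hib
      simp only [Set.mem_preimage, Set.mem_Iic, not_le] at hib
      simp only [Set.mem_setOf_eq] at hi
      have hemp := hnot i.1 i.2 hib
      rw [hemp] at hi
      exact Set.not_nonempty_empty hi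
    exact ((Iic_countable hb).preimage Subtype.val_injective).mono hsub
  -- initial stage
  obtain ⟨a₀, ha₀A, _, ha₀V⟩ := hbig O hOop hOne subset_rfl 0 om1_isLimit.pos
  -- the recursion step
  set step : Ordinal.{0} × Set X → Ordinal.{0} × Set X := fun s =>
    if h : ∃ a, a ∈ A ∧ s.1 < a ∧
        (Vq f hcon (Dset f hcon a) q ∩ (s.2 ∩ Vq f hcon (Dset f hcon s.1) q)).Nonempty
    then (h.choose, s.2 ∩ Vq f hcon (Dset f hcon s.1) q)
    else (s.1, s.2 ∩ Vq f hcon (Dset f hcon s.1) q) with hstepdef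
  set sq : ℕ → Ordinal.{0} × Set X := fun n => step^[n] (a₀, O) with hsq
  set al : ℕ → Ordinal.{0} := fun n => (sq n).1 with hal
  set G : ℕ → Set X := fun n => (sq n).2 with hG
  set Inv : Ordinal.{0} × Set X → Prop := fun s =>
    s.1 ∈ A ∧ IsOpen s.2 ∧ s.2 ⊆ O ∧
      (Vq f hcon (Dset f hcon s.1) q ∩ s.2).Nonempty with hInv
  have hstep : ∀ s, Inv s → Inv (step s) ∧ s.1 < (step s).1 ∧
      (step s).2 = s.2 ∩ Vq f hcon (Dset f hcon s.1) q := by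
    rintro s ⟨hsA, hsop, hsO, hsne⟩
    set G' := s.2 ∩ Vq f hcon (Dset f hcon s.1) q with hG'
    have hG'op : IsOpen G' := hsop.inter (Vq_open f hcon hfx _ q)
    have hG'ne : G'.Nonempty := by
      obtain ⟨x, hx1, hx2⟩ := hsne
      exact ⟨x, hx2, hx1⟩
    have hG'O : G' ⊆ O := fun x hx => hsO hx.1
    have hex : ∃ a, a ∈ A ∧ s.1 < a ∧
        (Vq f hcon (Dset f hcon a) q ∩ G').Nonempty := by
      obtain ⟨a, haA, hba, hane⟩ := hbig G' hG'op hG'ne hG'O s.1 (hAom s.1 hsA)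
      exact ⟨a, haA, hba, hane⟩
    have hstep_eq : step s = (hex.choose, s.2 ∩ Vq f hcon (Dset f hcon s.1) q) := by
      rw [hstepdef]
      exact dif_pos hex
    rw [hstep_eq]
    obtain ⟨haA, hba, hane⟩ := hex.choose_spec
    exact ⟨⟨haA, hG'op, hG'O, hane⟩, hba, rfl⟩
  have hInvn : ∀ n, Inv (sq n) := by
    intro n
    induction n with
    | zero => exact ⟨ha₀A, hOop, subset_rfl, ha₀V⟩
    | succ n ih =>
      have : sq (n+1) = step (sq n) := Function.iterate_succ_apply' step n (a₀, O)
      rw [this]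
      exact (hstep (sq n) ih).1
  have hsucc : ∀ n, sq (n+1) = step (sq n) := fun n => Function.iterate_succ_apply' step n (a₀, O)
  have halmono : StrictMono al := by
    apply strictMono_nat_of_lt_succ
    intro n
    have h2 := (hstep (sq n) (hInvn n)).2.1
    rw [← hsucc n] at h2
    exact h2
  have hGsucc : ∀ n, G (n+1) = G n ∩ Vq f hcon (Dset f hcon (al n)) q := by
    intro n
    have h2 := (hstep (sq n) (hInvn n)).2.2
    rw [← hsucc n] at h2
    exact h2
  have halA : ∀ n, al n ∈ A := fun n => (hInvn n).1
  have halom : ∀ n, al n < om1 := fun n => hAom _ (halA n)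
  have hGne : ∀ n, (G n).Nonempty := by
    intro n
    obtain ⟨x, _, hx2⟩ := (hInvn n).2.2.2
    exact ⟨x, hx2⟩
  have hGsub : ∀ n k, k < n → G n ⊆ Vq f hcon (Dset f hcon (al k)) q := by
    intro n
    induction n with
    | zero => intro k hk; omega
    | succ n ih =>
      intro k hk
      rcases Nat.lt_succ_iff_lt_or_eq.1 hk with h | h
      · rw [hGsucc n]
        exact Set.inter_subset_left.trans (ih k h)
      · subst h
        rw [hGsucc k]
        exact Set.inter_subset_right
  -- choose the points y m
  have hy : ∀ m : ℕ, ∃ x : X, (∀ k ≤ m, x ∈ Vq f hcon (Dset f hcon (al k)) q) ∧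
      x ∈ Eset f hcon (al m) := by
    intro m
    set F : Set Ordinal.{0} := al '' (Set.Iic m) with hF
    have hFfin : F.Finite := (Set.finite_Iic m).image al
    have hFsub : F ⊆ Set.Iic (al m) := by
      rintro β ⟨k, hk, rfl⟩
      exact halmono.monotone hk
    have hne : (⋂ β ∈ F, Vq f hcon (Dset f hcon β) q).Nonempty := by
      obtain ⟨x, hx⟩ := hGne (m+1)
      refine ⟨x, Set.mem_iInter₂.2 ?_⟩
      rintro β ⟨k, hk, rfl⟩
      exact hGsub (m+1) k (Nat.lt_succ_of_le hk) hx
    obtain ⟨x, hx1, hx2⟩ := Eset_sel f hcon (al m) F q hFfin hFsub hne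
    refine ⟨x, ?_, hx2⟩
    intro k hk
    exact Set.mem_iInter₂.1 hx1 (al k) ⟨k, hk, rfl⟩
  choose y hybig hyE using hy
  -- zeros
  have hzero : ∀ m n : ℕ, m < n → hf f hcon (Dset f hcon (al n)) (y m) = 0 := by
    intro m n hmn
    apply hf_zero f hcon _ (Dset_countable f hcon (halom n))
    exact Eset_subset_Dset f hcon (halmono hmn) (hyE m)
  -- ultrafilter limits
  haveI : Nonempty X := ⟨y 0⟩
  set U : Ultrafilter ℕ := Ultrafilter.of Filter.atTop with hU
  have hUle : (U : Filter ℕ) ≤ Filter.atTop := Ultrafilter.of_le _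
  have hDcnt : ∀ n, (Dset f hcon (al n)).Countable :=
    fun n => Dset_countable f hcon (halom n)
  set p1 : ℕ → Y := fun n => (yy f hcon _ (hDcnt n)).1 with hp1
  set p2 : ℕ → Y := fun n => (yy f hcon _ (hDcnt n)).2 with hp2
  have hhf : ∀ n, hf f hcon (Dset f hcon (al n)) =
      fun x => f (x, p1 n) - f (x, p2 n) := fun n => hf_eq f hcon _ (hDcnt n)
  set yl := (U.map y).lim with hyl
  have hylim : Filter.Tendsto y (U : Filter ℕ) (nhds yl) := by
    have := (U.map y).le_nhds_lim
    rwa [Ultrafilter.coe_map] at this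
  set q1 := (U.map p1).lim with hq1
  set q2 := (U.map p2).lim with hq2
  have hq1lim : Filter.Tendsto p1 (U : Filter ℕ) (nhds q1) := by
    have := (U.map p1).le_nhds_lim
    rwa [Ultrafilter.coe_map] at this
  have hq2lim : Filter.Tendsto p2 (U : Filter ℕ) (nhds q2) := by
    have := (U.map p2).le_nhds_lim
    rwa [Ultrafilter.coe_map] at this
  set hoo : X → ℝ := fun x => f (x, q1) - f (x, q2) with hhoo
  have hc1 : ∀ x : X, Filter.Tendsto (fun n => hf f hcon (Dset f hcon (al n)) x)
      (U : Filter ℕ) (nhds (hoo x)) := by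
    intro x
    have h1 : Filter.Tendsto (fun n => f (x, p1 n) - f (x, p2 n))
        (U : Filter ℕ) (nhds (hoo x)) := by
      exact (((hfy x).tendsto q1).comp hq1lim).sub (((hfy x).tendsto q2).comp hq2lim)
    refine h1.congr fun n => ?_
    rw [hhf n]
  have hmemgt : ∀ m : ℕ, {n : ℕ | m < n} ∈ (U : Filter ℕ) :=
    fun m => hUle (Filter.Ioi_mem_atTop m)
  have hmemge : ∀ m : ℕ, {n : ℕ | m ≤ n} ∈ (U : Filter ℕ) :=
    fun m => hUle (Filter.Ici_mem_atTop m)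
  -- h∞ vanishes at each y m
  have hzero2 : ∀ m : ℕ, hoo (y m) = 0 := by
    intro m
    have h1 := hc1 (y m)
    have h2 : Filter.Tendsto (fun n => hf f hcon (Dset f hcon (al n)) (y m))
        (U : Filter ℕ) (nhds 0) := by
      refine Filter.Tendsto.congr' ?_ tendsto_const_nhds
      filter_upwards [hmemgt m] with n hn
      exact (hzero m n hn).symm
    exact tendsto_nhds_unique h1 h2
  -- h∞ continuous, so vanishes at yl
  have hooc : Continuous hoo := (hfx q1).sub (hfx q2)
  have hooyl : hoo yl = 0 := by
    have h1 : Filter.Tendsto (fun m => hoo (y m)) (U : Filter ℕ) (nhds (hoo yl)) :=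
      (hooc.tendsto yl).comp hylim
    have h2 : Filter.Tendsto (fun m => hoo (y m)) (U : Filter ℕ) (nhds 0) := by
      refine Filter.Tendsto.congr (fun m => (hzero2 m).symm) tendsto_const_nhds
    exact tendsto_nhds_unique h1 h2
  -- each stage function is big at yl
  have hbigyl : ∀ n : ℕ, (q : ℝ) ≤ |hf f hcon (Dset f hcon (al n)) yl| := by
    intro n
    have hcn : Continuous (hf f hcon (Dset f hcon (al n))) := hf_cont f hcon hfx _
    have h1 : Filter.Tendsto (fun m => |hf f hcon (Dset f hcon (al n)) (y m)|)
        (U : Filter ℕ) (nhds (|hf f hcon (Dset f hcon (al n)) yl|)) :=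
      ((continuous_abs.comp hcn).tendsto yl).comp hylim
    refine ge_of_tendsto h1 ?_
    filter_upwards [hmemge n] with m hm
    have hmem := hybig m n hm
    simp only [Vq, Set.mem_setOf_eq] at hmem
    exact le_of_lt hmem
  -- conclude
  have hfinal : Filter.Tendsto (fun n => |hf f hcon (Dset f hcon (al n)) yl|)
      (U : Filter ℕ) (nhds (|hoo yl|)) :=
    (continuous_abs.tendsto _).comp (hc1 yl)
  have : (q : ℝ) ≤ |hoo yl| := ge_of_tendsto hfinal (Filter.Eventually.of_forall hbigyl)
  rw [hooyl, abs_zero] at this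
  have : (0:ℝ) < (q:ℝ) := by exact_mod_cast hq0
  linarith

end SepMain

theorem rudin_baire_one {X Z : Type*} [TopologicalSpace X] [MetricSpace Z]
    (F : X × Z → ℝ) (hFx : ∀ z, Continuous fun x => F (x, z))
    (hFz : ∀ x, Continuous fun z => F (x, z)) : FirstBaireClass F := by
  have hcov : ∀ n : ℕ, (Set.univ : Set Z) ⊆ ⋃ c : Z, Metric.ball c (1/(n+1) : ℝ) := by
    intro n z _
    exact Set.mem_iUnion.2 ⟨z, by simp [Metric.mem_ball]; positivity⟩
  have hpou : ∀ n : ℕ, ∃ ρ : PartitionOfUnity Z Z Set.univ,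
      ρ.IsSubordinate (fun c => Metric.ball c (1/(n+1) : ℝ)) :=
    fun n => PartitionOfUnity.exists_isSubordinate isClosed_univ _
      (fun c => Metric.isOpen_ball) (hcov n)
  choose ρ hρ using hpou
  refine ⟨fun n p => ∑ᶠ c : Z, ρ n c p.2 * F (p.1, c), ?_, ?_⟩
  · intro n
    apply continuous_finsum
    · intro c
      exact (((ρ n c).continuous).comp continuous_snd).mul ((hFx c).comp continuous_fst)
    · intro p
      obtain ⟨W, hWmem, hWfin⟩ := (ρ n).locallyFinite p.2
      refine ⟨(Set.univ : Set X) ×ˢ W, prod_mem_nhds Filter.univ_mem hWmem, ?_⟩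
      apply hWfin.subset
      rintro c ⟨⟨x', z'⟩, hs, hm⟩
      refine ⟨z', ?_, hm.2⟩
      have : ρ n c z' ≠ 0 := by
        intro h0
        apply hs
        simp [h0]
      exact this
  · rintro ⟨x, z⟩
    rw [Metric.tendsto_atTop]
    intro ε hε
    obtain ⟨δ, hδ, hcont⟩ := Metric.continuous_iff.1 (hFz x) z (ε/2) (by linarith)
    obtain ⟨N, hN⟩ := exists_nat_one_div_lt hδ
    refine ⟨N, fun n hn => ?_⟩
    have hfin : {c : Z | ρ n c z ≠ 0}.Finite := by
      have := (ρ n).locallyFinite.point_finite z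
      simpa [Function.support] using this
    set T : Finset Z := hfin.toFinset with hT
    have hmemT : ∀ {c : Z}, c ∈ T ↔ ρ n c z ≠ 0 := fun {c} => hfin.mem_toFinset
    have hsupp : ∀ (g : Z → ℝ), (∀ c, ρ n c z = 0 → g c = 0) → ∑ᶠ c, g c = ∑ c ∈ T, g c := by
      intro g hg
      apply finsum_eq_finset_sum_of_support_subset
      intro c hc
      have : ρ n c z ≠ 0 := fun h0 => hc (hg c h0)
      exact Finset.mem_coe.2 (hmemT.2 this)
    have hsum1 : ∑ c ∈ T, ρ n c z = 1 := by
      rw [← hsupp (fun c => ρ n c z) (fun c h => h)]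
      exact (ρ n).sum_eq_one (mem_univ z)
    have hgn : ∑ᶠ c : Z, ρ n c z * F (x, c) = ∑ c ∈ T, ρ n c z * F (x, c) :=
      hsupp _ (fun c h0 => by rw [h0, zero_mul])
    have hterm : ∀ c ∈ T, |F (x, c) - F (x, z)| ≤ ε/2 := by
      intro c hc
      have hne : ρ n c z ≠ 0 := hmemT.1 hc
      have hzs : z ∈ Metric.ball c (1/(n+1) : ℝ) :=
        hρ n c (subset_tsupport _ (Function.mem_support.2 hne))
      have h1 : dist z c < 1/(n+1 : ℝ) := Metric.mem_ball.1 hzs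
      have h2 : (1/(n+1 : ℝ)) ≤ 1/(N+1 : ℝ) := by
        apply one_div_le_one_div_of_le
        · positivity
        · exact_mod_cast Nat.succ_le_succ hn
      have h3 : dist c z < δ := by
        rw [dist_comm]; linarith
      have := hcont c h3
      rw [Real.dist_eq] at this
      linarith
    have key : |∑ c ∈ T, ρ n c z * F (x, c) - F (x, z)| ≤ ε/2 := by
      have hexp : ∑ c ∈ T, ρ n c z * F (x, c) - F (x, z)
          = ∑ c ∈ T, ρ n c z * (F (x, c) - F (x, z)) := by
        rw [Finset.sum_congr rfl (fun c _ => (mul_sub (ρ n c z) (F (x,c)) (F (x,z)))),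
          Finset.sum_sub_distrib, ← Finset.sum_mul, hsum1, one_mul]
      rw [hexp]
      calc |∑ c ∈ T, ρ n c z * (F (x, c) - F (x, z))|
          ≤ ∑ c ∈ T, |ρ n c z * (F (x, c) - F (x, z))| := Finset.abs_sum_le_sum_abs _ _
        _ ≤ ∑ c ∈ T, ρ n c z * (ε/2) := by
            apply Finset.sum_le_sum
            intro c hc
            rw [abs_mul, abs_of_nonneg ((ρ n).nonneg c z)]
            exact mul_le_mul_of_nonneg_left (hterm c hc) ((ρ n).nonneg c z)
        _ = ε/2 := by rw [← Finset.sum_mul, hsum1, one_mul]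
    calc dist (∑ᶠ c : Z, ρ n c z * F (x, c)) (F (x, z))
        = |∑ c ∈ T, ρ n c z * F (x, c) - F (x, z)| := by rw [hgn, Real.dist_eq]
      _ ≤ ε/2 := key
      _ < ε := by linarith

theorem forward_dir {X : Type u} {Y : Type v} [TopologicalSpace X] [TopologicalSpace Y]
    [CompactSpace X] [T2Space X] [CompactSpace Y] [T2Space Y]
    (hccc : ∀ 𝒞 : Set (Set X), (∀ s ∈ 𝒞, IsOpen s ∧ s.Nonempty) →
      𝒞.PairwiseDisjoint id → 𝒞.Countable)
    (f : X × Y → ℝ)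
    (hfx : ∀ y, Continuous fun x => f (x, y))
    (hfy : ∀ x, Continuous fun y => f (x, y)) :
    FirstBaireClass f := by
  rcases isEmpty_or_nonempty X with hX | hX
  · exact ⟨fun _ _ => 0, fun _ => continuous_const,
      fun w => (hX.elim w.1)⟩
  rcases isEmpty_or_nonempty Y with hY | hY
  · exact ⟨fun _ _ => 0, fun _ => continuous_const,
      fun w => (hY.elim w.2)⟩
  obtain ⟨D, hDc, hDsep⟩ := sep_main hccc f hfx hfy
  obtain ⟨x₀⟩ := hX
  set D' : Set X := insert x₀ D with hD'
  have hD'c : D'.Countable := hDc.insert x₀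
  obtain ⟨d, hd⟩ := hD'c.exists_eq_range (Set.insert_nonempty x₀ D)
  -- the factor map
  set Φ : Y → (ℕ → ℝ) := fun y n => f (d n, y) with hΦdef
  have hΦ : Continuous Φ := continuous_pi fun n => hfy (d n)
  set Z : Set (ℕ → ℝ) := Set.range Φ with hZ
  haveI : CompactSpace ↥Z := isCompact_iff_compactSpace.1 (isCompact_range hΦ)
  letI : MetricSpace ↥Z := TopologicalSpace.metrizableSpaceMetric ↥Z
  set ΦZ : Y → ↥Z := fun y => ⟨Φ y, Set.mem_range_self y⟩ with hΦZ
  have hΦZc : Continuous ΦZ := hΦ.subtype_mk _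
  have hΦZs : Function.Surjective ΦZ := by
    rintro ⟨z, y, rfl⟩
    exact ⟨y, rfl⟩
  have hquot : Topology.IsQuotientMap ΦZ :=
    (hΦZc.isClosedMap).isQuotientMap hΦZc hΦZs
  -- a selection
  have hsel : ∀ z : ↥Z, ∃ y : Y, Φ y = z.1 := fun z => z.2
  choose zsel hzsel using hsel
  set F : X × ↥Z → ℝ := fun p => f (p.1, zsel p.2) with hFdef
  have hwd : ∀ (x : X) (y : Y), F (x, ΦZ y) = f (x, y) := by
    intro x y
    have hag : ∀ dd ∈ D', f (dd, zsel (ΦZ y)) = f (dd, y) := by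
      intro dd hdd
      rw [hd] at hdd
      obtain ⟨n, rfl⟩ := hdd
      have : Φ (zsel (ΦZ y)) = Φ y := hzsel (ΦZ y)
      exact congrFun this n
    have hagD : ∀ dd ∈ D, f (dd, zsel (ΦZ y)) = f (dd, y) :=
      fun dd hdd => hag dd (Set.mem_insert_of_mem x₀ hdd)
    exact hDsep (zsel (ΦZ y)) y hagD x
  have hFx : ∀ z, Continuous fun x => F (x, z) := fun z => hfx (zsel z)
  have hFz : ∀ x, Continuous fun z => F (x, z) := by
    intro x
    rw [hquot.continuous_iff]
    have : ((fun z => F (x, z)) ∘ ΦZ) = fun y => f (x, y) := funext fun y => hwd x y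
    rw [this]
    exact hfy x
  obtain ⟨g, hgc, hgt⟩ := rudin_baire_one F hFx hFz
  refine ⟨fun n p => g n (p.1, ΦZ p.2), ?_, ?_⟩
  · intro n
    exact (hgc n).comp (continuous_fst.prodMk (hΦZc.comp continuous_snd))
  · rintro ⟨x, y⟩
    have := hgt (x, ΦZ y)
    rwa [hwd x y] at this

theorem reverse_dir (X : Type u) [TopologicalSpace X] [CompactSpace X] [T2Space X]
    (hRHS : ∀ (Y : Type u) (_ : TopologicalSpace Y), CompactSpace Y → T2Space Y →
        ∀ f : X × Y → ℝ,
          ((∀ y, Continuous fun x => f (x, y)) ∧ (∀ x, Continuous fun y => f (x, y))) →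
          FirstBaireClass f) :
    ∀ 𝒞 : Set (Set X), (∀ s ∈ 𝒞, IsOpen s ∧ s.Nonempty) →
        𝒞.PairwiseDisjoint id → 𝒞.Countable := by
  intro 𝒞 h𝒞 hdisj
  by_contra hunc
  letI : TopologicalSpace ↥𝒞 := ⊥
  haveI : DiscreteTopology ↥𝒞 := ⟨rfl⟩
  set Y := OnePoint ↥𝒞 with hY
  -- pick points
  have hx : ∀ s : ↥𝒞, ∃ x : X, x ∈ (s : Set X) := fun s => (h𝒞 s s.2).2
  choose xs hxs using hx
  -- Urysohn functions
  have hφ : ∀ s : ↥𝒞, ∃ φ : C(X, ℝ), Set.EqOn (⇑φ) 0 ((s : Set X)ᶜ) ∧ φ (xs s) = 1 ∧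
      ∀ x, φ x ∈ Set.Icc (0:ℝ) 1 := by
    intro s
    obtain ⟨φ, h0, h1, hb⟩ := exists_continuous_zero_one_of_isClosed
      (isClosed_compl_iff.2 (h𝒞 s s.2).1) (isClosed_singleton (x := xs s))
      (by simp [Set.disjoint_singleton_right, hxs s])
    exact ⟨φ, h0, by simpa using h1 (mem_singleton (xs s)), hb⟩
  choose φ hφ0 hφ1 hφb using hφ
  -- the function
  set f : X × Y → ℝ := fun p => OnePoint.elim p.2 0 (fun s => φ s p.1) with hf
  have hsep : (∀ y, Continuous fun x => f (x, y)) ∧ (∀ x, Continuous fun y : Y => f (x, y)) := by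
    constructor
    · intro y
      induction y using OnePoint.rec with
      | infty => simpa [hf] using continuous_const
      | coe s => simpa [hf] using (φ s).continuous
    · intro x
      rw [show (fun y : Y => f (x, y)) = fun y : Y => OnePoint.elim y 0 (fun s => φ s x) from rfl]
      apply (OnePoint.continuous_iff_from_discrete _).2
      simp only [OnePoint.elim_infty]
      have hfin : {s : ↥𝒞 | ¬ ((0:ℝ) = OnePoint.elim (OnePoint.some s) 0 (fun s => φ s x))}.Finite := by
        apply Set.Finite.subset (Set.Subsingleton.finite (s := {s : ↥𝒞 | x ∈ (s : Set X)}) ?_)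
        · intro s hs
          simp only [OnePoint.elim_some, mem_setOf_eq] at hs ⊢
          by_contra hxs'
          exact hs (by rw [hφ0 s hxs']; rfl)
        · intro s hs t ht
          have hnd : ¬ Disjoint (id (s : Set X)) (id (t : Set X)) :=
            Set.not_disjoint_iff.2 ⟨x, hs, ht⟩
          exact Subtype.ext (hdisj.elim s.2 t.2 hnd)
      refine tendsto_const_nhds.congr' ?_
      exact Filter.eventually_cofinite.2 hfin
  obtain ⟨g, hgc, hgt⟩ := hRHS Y _ inferInstance inferInstance f hsep
  -- for each s, find N with g n (xs s, some s) ≥ 3/4 for n ≥ N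
  have hN : ∀ s : ↥𝒞, ∃ N : ℕ, ∀ n ≥ N, (3/4 : ℝ) ≤ g n (xs s, OnePoint.some s) := by
    intro s
    have h1 : f (xs s, OnePoint.some s) = 1 := by simp [hf, hφ1 s]
    have := hgt (xs s, OnePoint.some s)
    rw [h1] at this
    have hev : ∀ᶠ n in atTop, (3/4:ℝ) ≤ g n (xs s, OnePoint.some s) := by
      have : ∀ᶠ n in atTop, (3/4:ℝ) < g n (xs s, OnePoint.some s) :=
        this.eventually_const_lt (by norm_num)
      exact this.mono fun n hn => hn.le
    exact eventually_atTop.1 hev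
  choose N hNs using hN
  -- some fiber of N is uncountable
  have hfib : ∃ n : ℕ, ¬ (N ⁻¹' {n} : Set ↥𝒞).Countable := by
    by_contra hall
    push_neg at hall
    have : (Set.univ : Set ↥𝒞).Countable := by
      have : (Set.univ : Set ↥𝒞) = ⋃ n : ℕ, N ⁻¹' {n} := by
        ext s; simp
      rw [this]
      exact Set.countable_iUnion fun n => hall n
    have : Countable ↥𝒞 := Set.countable_univ_iff.1 this
    exact hunc (Set.countable_coe_iff.1 this)
  obtain ⟨n₀, hn₀⟩ := hfib
  -- the closed set C
  set C : Set (X × Y) := {w | ∀ n ≥ n₀, (3/4:ℝ) ≤ g n w} with hC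
  have hCclosed : IsClosed C := by
    have : C = ⋂ n : ℕ, ⋂ _ : n ≥ n₀, (g n) ⁻¹' Set.Ici (3/4 : ℝ) := by
      ext w; simp [hC, mem_setOf_eq]
    rw [this]
    exact isClosed_iInter fun n => isClosed_iInter fun _ => (isClosed_Ici).preimage (hgc n)
  have hCcomp : IsCompact C := hCclosed.isCompact
  -- cover of C
  have hcov : C ⊆ ⋃ s : ↥𝒞, ((s : Set X) ×ˢ ({OnePoint.some s} : Set Y)) := by
    rintro ⟨x, y⟩ hw
    have hfw : (3/4:ℝ) ≤ f (x, y) := by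
      refine ge_of_tendsto (hgt (x, y)) ?_
      exact eventually_atTop.2 ⟨n₀, fun n hn => hw n hn⟩
    induction y using OnePoint.rec with
    | infty => simp [hf] at hfw; norm_num at hfw
    | coe s =>
      have hx' : x ∈ (s : Set X) := by
        by_contra hx'
        rw [show f (x, OnePoint.some s) = φ s x from rfl, hφ0 s hx'] at hfw
        norm_num at hfw
      exact Set.mem_iUnion.2 ⟨s, by simp [hx']⟩
  have hopen : ∀ s : ↥𝒞, IsOpen ((s : Set X) ×ˢ ({OnePoint.some s} : Set Y)) := by
    intro s
    refine (h𝒞 s s.2).1.prod ?_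
    have : ({OnePoint.some s} : Set Y) = (OnePoint.some : ↥𝒞 → Y) '' {s} := by simp
    rw [this]
    exact OnePoint.isOpen_image_coe.2 (isOpen_discrete _)
  obtain ⟨t, ht⟩ := hCcomp.elim_finite_subcover _ hopen hcov
  -- fiber is inside t
  apply hn₀
  have hsub : (N ⁻¹' {n₀} : Set ↥𝒞) ⊆ (t : Set ↥𝒞) := by
    intro s hs
    have hmem : (xs s, (OnePoint.some s : Y)) ∈ C := by
      intro n hn
      exact hNs s n (by simpa using hs ▸ hn)
    have := ht hmem
    simp only [Set.mem_iUnion] at this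
    obtain ⟨s', hs', hmem'⟩ := this
    have h2 : s = s' := OnePoint.coe_injective (Set.mem_singleton_iff.1 hmem'.2)
    rwa [h2]
  exact (t.finite_toSet.subset hsub).countable


/-- A compact Hausdorff space `X` has countable Souslin number (ccc) iff for every
compact Hausdorff space `Y` every separately continuous function `X × Y → ℝ` is of
the first Baire class. -/
theorem ccc_iff_separatelyContinuous_baireOne (X : Type u) [TopologicalSpace X]
    [CompactSpace X] [T2Space X] :
    (∀ 𝒞 : Set (Set X), (∀ s ∈ 𝒞, IsOpen s ∧ s.Nonempty) →
        𝒞.PairwiseDisjoint id → 𝒞.Countable) ↔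
      (∀ (Y : Type u) (_ : TopologicalSpace Y), CompactSpace Y → T2Space Y →
        ∀ f : X × Y → ℝ,
          ((∀ y, Continuous fun x => f (x, y)) ∧ (∀ x, Continuous fun y => f (x, y))) →
          FirstBaireClass f) := by
  constructor
  · intro hccc Y instY hYc hYt2 f hsep
    exact forward_dir hccc f hsep.1 hsep.2
  · exact reverse_dir X
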